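/- (i) For every x ∈ ℂ the series defining Ĉ(x) converges absolutely and every entry of Ĉ is an entire function of x. (ii) For every x ∈ Π₋ and j = 1,2 the column C_j(x) = x^{μ_j}·Ĉ_j(x) is differentiable and satisfies the singular Dirac system B·C_j′(x) + (μ/x)·J·C_j(x) = C_j(x). (iii) det C(x) = 1 for all x ∈ Π₋. -/

import Mathlib

open Complex Matrix Set Filter



/-- The slit plane `ℂ ∖ (-∞, 0]`. -/
def PiMinus : Set ℂ := {x : ℂ | x.im ≠ 0 ∨ 0 < x.re}

/-- Even-index coefficients `c_{j,2k}`. -/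
noncomputable def cEven (c0 μj : ℂ) (k : ℕ) : ℂ :=
  (-1) ^ k * c0 / (2 ^ k * (Nat.factorial k) *
    ∏ s ∈ Finset.range k, (2 * μj + 1 + 2 * (s : ℂ)))

/-- Odd-index coefficients `c_{j,2k+1}`. -/
noncomputable def cOdd (c0 μj : ℂ) (k : ℕ) : ℂ :=
  (-1) ^ k * c0 / (2 ^ k * (Nat.factorial k) *
    ∏ s ∈ Finset.range (k + 1), (2 * μj + 1 + 2 * (s : ℂ)))

section coeffs

variable (ν c0 : ℂ)

lemma cEven_zero : cEven c0 ν 0 = c0 := by simp [cEven]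

lemma prodD_ne (h : ∀ s : ℕ, 2 * ν + 1 + 2 * (s : ℂ) ≠ 0) (n : ℕ) :
    ∏ s ∈ Finset.range n, (2 * ν + 1 + 2 * (s : ℂ)) ≠ 0 :=
  Finset.prod_ne_zero_iff.2 fun s _ => h s

lemma cEven_succ (h : ∀ s : ℕ, 2 * ν + 1 + 2 * (s : ℂ) ≠ 0) (k : ℕ) :
    cEven c0 ν (k + 1) = cEven c0 ν k * (-1 / (2 * ((k : ℂ) + 1) * (2 * ν + 1 + 2 * (k : ℂ)))) := by
  have h1 : ((2 : ℂ)) ^ k ≠ 0 := pow_ne_zero _ two_ne_zero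
  have h2 : ((Nat.factorial k : ℂ)) ≠ 0 := Nat.cast_ne_zero.2 (Nat.factorial_ne_zero k)
  have h3 := prodD_ne ν h k
  have h4 := h k
  have h5 : ((k : ℂ) + 1) ≠ 0 := Nat.cast_add_one_ne_zero k
  simp only [cEven, Finset.prod_range_succ, pow_succ, Nat.factorial_succ]
  push_cast
  field_simp

lemma cOdd_eq (h : ∀ s : ℕ, 2 * ν + 1 + 2 * (s : ℂ) ≠ 0) (k : ℕ) :
    cOdd c0 ν k = cEven c0 ν k * (2 * ν + 1 + 2 * (k : ℂ))⁻¹ := by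
  have h1 : ((2 : ℂ)) ^ k ≠ 0 := pow_ne_zero _ two_ne_zero
  have h2 : ((Nat.factorial k : ℂ)) ≠ 0 := Nat.cast_ne_zero.2 (Nat.factorial_ne_zero k)
  have h3 := prodD_ne ν h k
  have h4 := h k
  simp only [cOdd, cEven, Finset.prod_range_succ]
  field_simp

lemma cOdd_succ (h : ∀ s : ℕ, 2 * ν + 1 + 2 * (s : ℂ) ≠ 0) (k : ℕ) :
    cOdd c0 ν (k + 1) = cOdd c0 ν k * (-1 / (2 * ((k : ℂ) + 1) * (2 * ν + 1 + 2 * ((k : ℂ) + 1)))) := by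
  have h1 : ((2 : ℂ)) ^ k ≠ 0 := pow_ne_zero _ two_ne_zero
  have h2 : ((Nat.factorial k : ℂ)) ≠ 0 := Nat.cast_ne_zero.2 (Nat.factorial_ne_zero k)
  have h3 := prodD_ne ν h (k + 1)
  have h4 := h (k + 1)
  have h5 : ((k : ℂ) + 1) ≠ 0 := Nat.cast_add_one_ne_zero k
  simp only [cOdd, Finset.prod_range_succ, pow_succ, Nat.factorial_succ]
  push_cast at h4 ⊢
  field_simp

/-- key identity 1 : `2(k+1) c_{even,k+1} = - c_{odd,k}` -/
lemma keyEO (h : ∀ s : ℕ, 2 * ν + 1 + 2 * (s : ℂ) ≠ 0) (k : ℕ) :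
    2 * ((k : ℂ) + 1) * cEven c0 ν (k + 1) = -cOdd c0 ν k := by
  have h4 := h k
  have h5 : ((k : ℂ) + 1) ≠ 0 := Nat.cast_add_one_ne_zero k
  rw [cEven_succ ν c0 h k, cOdd_eq ν c0 h k]
  field_simp

/-- key identity 2 : `(2ν+1+2k) c_{odd,k} = c_{even,k}` -/
lemma keyOE (h : ∀ s : ℕ, 2 * ν + 1 + 2 * (s : ℂ) ≠ 0) (k : ℕ) :
    (2 * ν + 1 + 2 * (k : ℂ)) * cOdd c0 ν k = cEven c0 ν k := by
  have h4 := h k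
  rw [cOdd_eq ν c0 h k]
  field_simp

end coeffs
/-- The `k`-th term of the series defining `Ĉ(x)`. -/
noncomputable def ChatTerm (μ c10 c20 : ℂ) (x : ℂ) (k : ℕ) : Matrix (Fin 2) (Fin 2) ℂ :=
  x ^ (2 * k) • !![x * cOdd c10 (-μ) k, cEven c20 μ k;
                   -(cEven c10 (-μ) k), x * cOdd c20 μ k]

/-- `Ĉ(x)`, the entire matrix factor. -/
noncomputable def Chat (μ c10 c20 : ℂ) (x : ℂ) : Matrix (Fin 2) (Fin 2) ℂ :=
  ∑' k : ℕ, ChatTerm μ c10 c20 x k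

/-- `μ_j` for the two column indices: `μ₁ = -μ` (index 0), `μ₂ = μ` (index 1). -/
noncomputable def muIdx (μ : ℂ) : Fin 2 → ℂ := ![-μ, μ]

/-- The columns `C_j(x) = x^{μ_j} Ĉ_j(x)` of `C(x) = Ĉ(x) H(x)`. -/
noncomputable def Ccol (μ c10 c20 : ℂ) (x : ℂ) (j : Fin 2) : Fin 2 → ℂ :=
  fun i => x ^ (muIdx μ j) * Chat μ c10 c20 x i j

/-- The matrix `C(x) = Ĉ(x) H(x)`, `H(x) = diag (x^{μ₁}, x^{μ₂})`. -/
noncomputable def Cmat (μ c10 c20 : ℂ) (x : ℂ) : Matrix (Fin 2) (Fin 2) ℂ :=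
  Matrix.of fun i j => Ccol μ c10 c20 x j i
section summable

lemma norm_natCast_add_one (k : ℕ) : ‖(k : ℂ) + 1‖ = (k : ℝ) + 1 := by
  rw [show ((k : ℂ) + 1) = ((k + 1 : ℕ) : ℂ) by push_cast; ring, Complex.norm_natCast]
  push_cast; ring

/-- master summability: ratio-decaying coefficients beat any geometric weight -/
lemma summable_weight (b : ℕ → ℂ) (A : ℝ) (w : ℕ → ℂ)
    (hb : ∀ k : ℕ, b (k + 1) = b k * (-1 / (2 * ((k : ℂ) + 1) * w k)))
    (hw : ∀ k : ℕ, 2 * (k : ℝ) - A ≤ ‖w k‖)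
    (R : ℝ) (hR : 0 ≤ R) :
    Summable fun k : ℕ => ((k : ℝ) + 1) * ‖b k‖ * R ^ (2 * k) := by
  apply summable_of_ratio_norm_eventually_le (r := 1 / 2) (by norm_num)
  have hev : ∀ᶠ k : ℕ in Filter.atTop, max (max 1 A) (R ^ 2) ≤ (k : ℝ) :=
    tendsto_natCast_atTop_atTop.eventually_ge_atTop _
  filter_upwards [hev] with k hk
  have hk1 : (1 : ℝ) ≤ (k : ℝ) := le_trans (le_trans (le_max_left _ _) (le_max_left _ _)) hk
  have hkA : A ≤ (k : ℝ) := le_trans (le_trans (le_max_right _ _) (le_max_left _ _)) hk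
  have hkR : R ^ 2 ≤ (k : ℝ) := le_trans (le_max_right _ _) hk
  have hWk : (k : ℝ) ≤ ‖w k‖ := by linarith [hw k]
  have hW0 : (0 : ℝ) < ‖w k‖ := lt_of_lt_of_le (by linarith) hWk
  have hbn : ‖b (k + 1)‖ = ‖b k‖ * (1 / (2 * ((k : ℝ) + 1) * ‖w k‖)) := by
    rw [hb k, norm_mul]
    congr 1
    rw [norm_div, norm_mul, norm_mul, norm_natCast_add_one, norm_neg, norm_one]
    norm_num
  rw [Real.norm_of_nonneg (by positivity), Real.norm_of_nonneg (by positivity)]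
  push_cast
  rw [hbn]
  have hP : R ^ (2 * (k + 1)) = R ^ (2 * k) * R ^ 2 := by rw [← pow_add]; ring_nf
  rw [hP]
  have key : ((k : ℝ) + 2) * R ^ 2 ≤ ((k : ℝ) + 1) * ((k : ℝ) + 1) * ‖w k‖ := by
    nlinarith
  calc ((k : ℝ) + 1 + 1) * (‖b k‖ * (1 / (2 * ((k : ℝ) + 1) * ‖w k‖))) * (R ^ (2 * k) * R ^ 2)
      = (((k : ℝ) + 2) * R ^ 2) * (‖b k‖ * R ^ (2 * k)) / (2 * ((k : ℝ) + 1) * ‖w k‖) := by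
        ring
    _ ≤ (((k : ℝ) + 1) * ((k : ℝ) + 1) * ‖w k‖) * (‖b k‖ * R ^ (2 * k)) / (2 * ((k : ℝ) + 1) * ‖w k‖) := by
        gcongr
    _ = 1 / 2 * (((k : ℝ) + 1) * ‖b k‖ * R ^ (2 * k)) := by
        rw [div_eq_iff (by positivity : (2 * ((k : ℝ) + 1) * ‖w k‖) ≠ 0)]
        ring

lemma summable_weight_even (ν c0 : ℂ) (h : ∀ s : ℕ, 2 * ν + 1 + 2 * (s : ℂ) ≠ 0)
    (R : ℝ) (hR : 0 ≤ R) :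
    Summable fun k : ℕ => ((k : ℝ) + 1) * ‖cEven c0 ν k‖ * R ^ (2 * k) := by
  apply summable_weight _ ‖2 * ν + 1‖ (fun k => 2 * ν + 1 + 2 * (k : ℂ))
    (fun k => cEven_succ ν c0 h k) _ R hR
  intro k
  have h1 := norm_sub_norm_le (2 * (k : ℂ)) (-(2 * ν + 1))
  simp only [norm_neg, sub_neg_eq_add] at h1
  have h2 : ‖2 * (k : ℂ) + (2 * ν + 1)‖ = ‖2 * ν + 1 + 2 * (k : ℂ)‖ := by rw [add_comm]
  have h3 : ‖(2 * (k : ℂ))‖ = 2 * (k : ℝ) := by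
    rw [norm_mul, Complex.norm_natCast]; norm_num
  rw [h2, h3] at h1
  linarith

lemma summable_weight_odd (ν c0 : ℂ) (h : ∀ s : ℕ, 2 * ν + 1 + 2 * (s : ℂ) ≠ 0)
    (R : ℝ) (hR : 0 ≤ R) :
    Summable fun k : ℕ => ((k : ℝ) + 1) * ‖cOdd c0 ν k‖ * R ^ (2 * k) := by
  apply summable_weight _ ‖2 * ν + 1‖ (fun k => 2 * ν + 1 + 2 * ((k : ℂ) + 1))
    (fun k => cOdd_succ ν c0 h k) _ R hR
  intro k
  have h1 := norm_sub_norm_le (2 * ((k : ℂ) + 1)) (-(2 * ν + 1))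
  simp only [norm_neg, sub_neg_eq_add] at h1
  have h2 : ‖2 * ((k : ℂ) + 1) + (2 * ν + 1)‖ = ‖2 * ν + 1 + 2 * ((k : ℂ) + 1)‖ := by rw [add_comm]
  have h3 : ‖(2 * ((k : ℂ) + 1))‖ = 2 * ((k : ℝ) + 1) := by
    rw [norm_mul, norm_natCast_add_one]; norm_num
  rw [h2, h3] at h1
  linarith

/-- comparison: norm-summability of `c k * a k * x ^ m k` for subquadratic exponents -/
lemma summable_norm_cmp (a : ℕ → ℂ)
    (hM : ∀ R : ℝ, 0 ≤ R → Summable fun k : ℕ => ((k : ℝ) + 1) * ‖a k‖ * R ^ (2 * k))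
    (c : ℕ → ℂ) (hc : ∀ k : ℕ, ‖c k‖ ≤ 2 * ((k : ℝ) + 1)) (x : ℂ)
    (m : ℕ → ℕ) (hm : ∀ k : ℕ, m k ≤ 2 * k) :
    Summable fun k : ℕ => ‖c k * a k * x ^ (m k)‖ := by
  set R : ℝ := ‖x‖ + 1 with hRdef
  have hxR : ‖x‖ ≤ R := by rw [hRdef]; linarith
  have hR1 : 1 ≤ R := by rw [hRdef]; linarith [norm_nonneg x]
  have hR0 : (0 : ℝ) ≤ R := by linarith
  refine Summable.of_nonneg_of_le (fun k => norm_nonneg _) ?_ ((hM R hR0).mul_left 2)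
  intro k
  have hx1 : ‖x ^ (m k)‖ ≤ R ^ (2 * k) := by
    rw [norm_pow]
    calc ‖x‖ ^ (m k) ≤ R ^ (m k) := pow_le_pow_left₀ (norm_nonneg x) hxR _
      _ ≤ R ^ (2 * k) := pow_le_pow_right₀ hR1 (hm k)
  rw [norm_mul, norm_mul]
  calc ‖c k‖ * ‖a k‖ * ‖x ^ (m k)‖
      ≤ (2 * ((k : ℝ) + 1)) * ‖a k‖ * R ^ (2 * k) := by
        apply mul_le_mul (mul_le_mul_of_nonneg_right (hc k) (norm_nonneg _)) hx1
          (norm_nonneg _) (by positivity)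
    _ = 2 * (((k : ℝ) + 1) * ‖a k‖ * R ^ (2 * k)) := by ring

lemma summable_cmp (a : ℕ → ℂ)
    (hM : ∀ R : ℝ, 0 ≤ R → Summable fun k : ℕ => ((k : ℝ) + 1) * ‖a k‖ * R ^ (2 * k))
    (c : ℕ → ℂ) (hc : ∀ k : ℕ, ‖c k‖ ≤ 2 * ((k : ℝ) + 1)) (x : ℂ)
    (m : ℕ → ℕ) (hm : ∀ k : ℕ, m k ≤ 2 * k) :
    Summable fun k : ℕ => c k * a k * x ^ (m k) :=
  (summable_norm_cmp a hM c hc x m hm).of_norm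

end summable
section series

noncomputable def Efun (ν c0 : ℂ) (x : ℂ) : ℂ := ∑' k : ℕ, cEven c0 ν k * x ^ (2 * k)
noncomputable def Ofun (ν c0 : ℂ) (x : ℂ) : ℂ := ∑' k : ℕ, cOdd c0 ν k * x ^ (2 * k)
noncomputable def DOfun (ν c0 : ℂ) (x : ℂ) : ℂ :=
  ∑' k : ℕ, ((2 * k : ℕ) : ℂ) * cOdd c0 ν k * x ^ (2 * k - 1)

lemma summable_pow_series (a : ℕ → ℂ)
    (hM : ∀ R : ℝ, 0 ≤ R → Summable fun k : ℕ => ((k : ℝ) + 1) * ‖a k‖ * R ^ (2 * k)) (x : ℂ) :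
    Summable fun k : ℕ => a k * x ^ (2 * k) := by
  have := summable_cmp a hM (fun _ => 1)
    (by intro k; rw [norm_one]; have := Nat.cast_nonneg (α := ℝ) k; linarith) x
    (fun k => 2 * k) (fun k => le_rfl)
  simpa using this

lemma summable_dseries (a : ℕ → ℂ)
    (hM : ∀ R : ℝ, 0 ≤ R → Summable fun k : ℕ => ((k : ℝ) + 1) * ‖a k‖ * R ^ (2 * k)) (x : ℂ) :
    Summable fun k : ℕ => ((2 * k : ℕ) : ℂ) * a k * x ^ (2 * k - 1) :=
  summable_cmp a hM _
    (fun k => by rw [Complex.norm_natCast]; push_cast; linarith) x _ (fun k => by omega)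

lemma hasDerivAt_series (a : ℕ → ℂ)
    (hM : ∀ R : ℝ, 0 ≤ R → Summable fun k : ℕ => ((k : ℝ) + 1) * ‖a k‖ * R ^ (2 * k)) (x : ℂ) :
    HasDerivAt (fun y : ℂ => ∑' k : ℕ, a k * y ^ (2 * k))
      (∑' k : ℕ, ((2 * k : ℕ) : ℂ) * a k * x ^ (2 * k - 1)) x := by
  set R : ℝ := ‖x‖ + 1 with hRdef
  have hR1 : (1 : ℝ) ≤ R := by rw [hRdef]; linarith [norm_nonneg x]
  have hR0 : (0 : ℝ) ≤ R := by linarith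
  have hball : x ∈ Metric.ball (0 : ℂ) R := by
    rw [Metric.mem_ball, dist_zero_right, hRdef]; linarith
  refine hasDerivAt_tsum_of_isPreconnected
    (u := fun k : ℕ => 2 * (((k : ℝ) + 1) * ‖a k‖ * R ^ (2 * k)))
    (g := fun (k : ℕ) (y : ℂ) => a k * y ^ (2 * k))
    (g' := fun (k : ℕ) (y : ℂ) => ((2 * k : ℕ) : ℂ) * a k * y ^ (2 * k - 1))
    ((hM R hR0).mul_left 2) Metric.isOpen_ball ((convex_ball _ _).isPreconnected)
    ?_ ?_ (Metric.mem_ball_self (by linarith)) ?_ hball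
  · intro k y _
    have h := (hasDerivAt_pow (2 * k) y).const_mul (a k)
    refine h.congr_deriv (Eq.symm ?_)
    ring
  · intro k y hy
    rw [Metric.mem_ball, dist_zero_right] at hy
    have h1 : ‖y‖ ^ (2 * k - 1) ≤ R ^ (2 * k) :=
      le_trans (pow_le_pow_left₀ (norm_nonneg y) hy.le _) (pow_le_pow_right₀ hR1 (by omega))
    have h2 : ‖((2 * k : ℕ) : ℂ) * a k * y ^ (2 * k - 1)‖
        = 2 * (k : ℝ) * ‖a k‖ * ‖y‖ ^ (2 * k - 1) := by
      rw [norm_mul, norm_mul, norm_pow, Complex.norm_natCast]; push_cast; ring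
    rw [h2]
    calc 2 * (k : ℝ) * ‖a k‖ * ‖y‖ ^ (2 * k - 1)
        ≤ 2 * ((k : ℝ) + 1) * ‖a k‖ * R ^ (2 * k) := by
          apply mul_le_mul (mul_le_mul_of_nonneg_right (by linarith) (norm_nonneg _)) h1
            (by positivity) (by positivity)
      _ = 2 * (((k : ℝ) + 1) * ‖a k‖ * R ^ (2 * k)) := by ring
  · apply summable_of_ne_finset_zero (s := ({0} : Finset ℕ))
    intro k hk
    simp only [Finset.mem_singleton] at hk
    show a k * (0 : ℂ) ^ (2 * k) = 0
    rw [zero_pow (by omega : 2 * k ≠ 0), mul_zero]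

lemma hasDerivAt_Ofun (ν c0 : ℂ) (h : ∀ s : ℕ, 2 * ν + 1 + 2 * (s : ℂ) ≠ 0) (x : ℂ) :
    HasDerivAt (Ofun ν c0) (DOfun ν c0 x) x :=
  hasDerivAt_series _ (summable_weight_odd ν c0 h) x

lemma DEfun_eq (ν c0 : ℂ) (h : ∀ s : ℕ, 2 * ν + 1 + 2 * (s : ℂ) ≠ 0) (x : ℂ) :
    (∑' k : ℕ, ((2 * k : ℕ) : ℂ) * cEven c0 ν k * x ^ (2 * k - 1)) = -(x * Ofun ν c0 x) := by
  unfold Ofun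
  rw [Summable.tsum_eq_zero_add (summable_dseries _ (summable_weight_even ν c0 h) x)]
  have h0 : ((2 * 0 : ℕ) : ℂ) * cEven c0 ν 0 * x ^ (2 * 0 - 1) = 0 := by norm_num
  rw [h0, zero_add]
  have hterm : ∀ k : ℕ, ((2 * (k + 1) : ℕ) : ℂ) * cEven c0 ν (k + 1) * x ^ (2 * (k + 1) - 1)
      = -(x * (cOdd c0 ν k * x ^ (2 * k))) := by
    intro k
    have hkey := keyEO ν c0 h k
    have hexp : 2 * (k + 1) - 1 = 2 * k + 1 := by omega
    rw [hexp, pow_succ]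
    push_cast
    linear_combination (x ^ (2 * k) * x) * hkey
  rw [tsum_congr hterm, tsum_neg, tsum_mul_left]

lemma hasDerivAt_Efun (ν c0 : ℂ) (h : ∀ s : ℕ, 2 * ν + 1 + 2 * (s : ℂ) ≠ 0) (x : ℂ) :
    HasDerivAt (Efun ν c0) (-(x * Ofun ν c0 x)) x := by
  have := hasDerivAt_series _ (summable_weight_even ν c0 h) x
  rw [DEfun_eq ν c0 h x] at this
  exact this

lemma x_mul_DOfun (ν c0 : ℂ) (h : ∀ s : ℕ, 2 * ν + 1 + 2 * (s : ℂ) ≠ 0) (x : ℂ) :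
    x * DOfun ν c0 x = Efun ν c0 x - (2 * ν + 1) * Ofun ν c0 x := by
  unfold DOfun Efun Ofun
  rw [← tsum_mul_left]
  have hterm : ∀ k : ℕ, x * (((2 * k : ℕ) : ℂ) * cOdd c0 ν k * x ^ (2 * k - 1))
      = ((2 * k : ℕ) : ℂ) * cOdd c0 ν k * x ^ (2 * k) := by
    intro k
    cases k with
    | zero => norm_num
    | succ n =>
      have hexp : 2 * (n + 1) - 1 = 2 * n + 1 := by omega
      have e2 : 2 * (n + 1) = 2 * n + 1 + 1 := by omega
      rw [hexp, e2, pow_succ]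
      ring
  rw [tsum_congr hterm]
  have hE := summable_pow_series _ (summable_weight_even ν c0 h) x
  have hO := summable_pow_series _ (summable_weight_odd ν c0 h) x
  calc ∑' k : ℕ, ((2 * k : ℕ) : ℂ) * cOdd c0 ν k * x ^ (2 * k)
      = ∑' k : ℕ, (cEven c0 ν k * x ^ (2 * k) - (2 * ν + 1) * (cOdd c0 ν k * x ^ (2 * k))) :=
        tsum_congr (fun k => by push_cast; linear_combination x ^ (2 * k) * keyOE ν c0 h k)
    _ = (∑' k : ℕ, cEven c0 ν k * x ^ (2 * k))
        - ∑' k : ℕ, (2 * ν + 1) * (cOdd c0 ν k * x ^ (2 * k)) :=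
        Summable.tsum_sub hE (hO.mul_left _)
    _ = (∑' k : ℕ, cEven c0 ν k * x ^ (2 * k))
        - (2 * ν + 1) * ∑' k : ℕ, cOdd c0 ν k * x ^ (2 * k) := by rw [tsum_mul_left]

lemma Efun_zero (ν c0 : ℂ) : Efun ν c0 0 = c0 := by
  unfold Efun
  rw [tsum_eq_single 0 ?_]
  · simp [cEven_zero]
  · intro k hk
    rw [zero_pow (by omega : 2 * k ≠ 0), mul_zero]

end series
section entries

lemma summable_norm_pow (a : ℕ → ℂ)
    (hM : ∀ R : ℝ, 0 ≤ R → Summable fun k : ℕ => ((k : ℝ) + 1) * ‖a k‖ * R ^ (2 * k)) (x : ℂ) :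
    Summable fun k : ℕ => ‖a k * x ^ (2 * k)‖ := by
  have := summable_norm_cmp a hM (fun _ => 1)
    (by intro k; rw [norm_one]; have := Nat.cast_nonneg (α := ℝ) k; linarith) x
    (fun k => 2 * k) (fun k => le_rfl)
  simpa using this

variable (μ c10 c20 : ℂ)

lemma chatTerm_apply00 (x : ℂ) (k : ℕ) :
    ChatTerm μ c10 c20 x k 0 0 = x * (cOdd c10 (-μ) k * x ^ (2 * k)) := by
  simp [ChatTerm]; ring

lemma chatTerm_apply01 (x : ℂ) (k : ℕ) :
    ChatTerm μ c10 c20 x k 0 1 = cEven c20 μ k * x ^ (2 * k) := by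
  simp [ChatTerm]; ring

lemma chatTerm_apply10 (x : ℂ) (k : ℕ) :
    ChatTerm μ c10 c20 x k 1 0 = -(cEven c10 (-μ) k * x ^ (2 * k)) := by
  simp [ChatTerm]; ring

lemma chatTerm_apply11 (x : ℂ) (k : ℕ) :
    ChatTerm μ c10 c20 x k 1 1 = x * (cOdd c20 μ k * x ^ (2 * k)) := by
  simp [ChatTerm]; ring

variable (h1 : ∀ s : ℕ, 2 * (-μ) + 1 + 2 * (s : ℂ) ≠ 0)
  (h2 : ∀ s : ℕ, 2 * μ + 1 + 2 * (s : ℂ) ≠ 0)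

include h1 h2 in
lemma chatTerm_summable_norm (x : ℂ) (i j : Fin 2) :
    Summable fun k : ℕ => ‖ChatTerm μ c10 c20 x k i j‖ := by
  fin_cases i <;> fin_cases j
  · have he : (fun k : ℕ => ‖ChatTerm μ c10 c20 x k 0 0‖)
        = fun k : ℕ => ‖x‖ * ‖cOdd c10 (-μ) k * x ^ (2 * k)‖ := by
      funext k; rw [chatTerm_apply00, norm_mul]
    exact he ▸ (summable_norm_pow _ (summable_weight_odd (-μ) c10 h1) x).mul_left ‖x‖
  · have he : (fun k : ℕ => ‖ChatTerm μ c10 c20 x k 0 1‖)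
        = fun k : ℕ => ‖cEven c20 μ k * x ^ (2 * k)‖ := by
      funext k; rw [chatTerm_apply01]
    exact he ▸ summable_norm_pow _ (summable_weight_even μ c20 h2) x
  · have he : (fun k : ℕ => ‖ChatTerm μ c10 c20 x k 1 0‖)
        = fun k : ℕ => ‖cEven c10 (-μ) k * x ^ (2 * k)‖ := by
      funext k; rw [chatTerm_apply10, norm_neg]
    exact he ▸ summable_norm_pow _ (summable_weight_even (-μ) c10 h1) x
  · have he : (fun k : ℕ => ‖ChatTerm μ c10 c20 x k 1 1‖)
        = fun k : ℕ => ‖x‖ * ‖cOdd c20 μ k * x ^ (2 * k)‖ := by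
      funext k; rw [chatTerm_apply11, norm_mul]
    exact he ▸ (summable_norm_pow _ (summable_weight_odd μ c20 h2) x).mul_left ‖x‖

include h1 h2 in
lemma chat_apply (x : ℂ) (i j : Fin 2) :
    Chat μ c10 c20 x i j = ∑' k : ℕ, ChatTerm μ c10 c20 x k i j := by
  have hs : Summable (fun k : ℕ => ChatTerm μ c10 c20 x k) :=
    Pi.summable.2 fun i => Pi.summable.2 fun j =>
      (chatTerm_summable_norm μ c10 c20 h1 h2 x i j).of_norm
  unfold Chat
  exact (congrFun (tsum_apply hs) j).trans (tsum_apply (Pi.summable.1 hs i))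

include h1 h2 in
lemma chat00 (x : ℂ) : Chat μ c10 c20 x 0 0 = x * Ofun (-μ) c10 x := by
  rw [chat_apply μ c10 c20 h1 h2 x 0 0, tsum_congr (chatTerm_apply00 μ c10 c20 x),
    tsum_mul_left]
  rfl

include h1 h2 in
lemma chat01 (x : ℂ) : Chat μ c10 c20 x 0 1 = Efun μ c20 x := by
  rw [chat_apply μ c10 c20 h1 h2 x 0 1, tsum_congr (chatTerm_apply01 μ c10 c20 x)]
  rfl

include h1 h2 in
lemma chat10 (x : ℂ) : Chat μ c10 c20 x 1 0 = -Efun (-μ) c10 x := by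
  rw [chat_apply μ c10 c20 h1 h2 x 1 0, tsum_congr (chatTerm_apply10 μ c10 c20 x),
    tsum_neg]
  rfl

include h1 h2 in
lemma chat11 (x : ℂ) : Chat μ c10 c20 x 1 1 = x * Ofun μ c20 x := by
  rw [chat_apply μ c10 c20 h1 h2 x 1 1, tsum_congr (chatTerm_apply11 μ c10 c20 x),
    tsum_mul_left]
  rfl

end entries
section wronskian

lemma wronskian (μ c10 c20 : ℂ) (hc : c10 * c20 = 1)
    (h1 : ∀ s : ℕ, 2 * (-μ) + 1 + 2 * (s : ℂ) ≠ 0)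
    (h2 : ∀ s : ℕ, 2 * μ + 1 + 2 * (s : ℂ) ≠ 0) (x : ℂ) :
    x ^ 2 * (Ofun (-μ) c10 x * Ofun μ c20 x) + Efun (-μ) c10 x * Efun μ c20 x = 1 := by
  have hder : ∀ y : ℂ, HasDerivAt
      (fun z : ℂ => z ^ 2 * (Ofun (-μ) c10 z * Ofun μ c20 z) + Efun (-μ) c10 z * Efun μ c20 z)
      0 y := by
    intro y
    have hO1 := hasDerivAt_Ofun (-μ) c10 h1 y
    have hO2 := hasDerivAt_Ofun μ c20 h2 y
    have hE1 := hasDerivAt_Efun (-μ) c10 h1 y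
    have hE2 := hasDerivAt_Efun μ c20 h2 y
    have h := ((hasDerivAt_pow 2 y).mul (hO1.mul hO2)).add (hE1.mul hE2)
    refine h.congr_deriv (Eq.symm ?_)
    have k1 := x_mul_DOfun (-μ) c10 h1 y
    have k2 := x_mul_DOfun μ c20 h2 y
    push_cast [Pi.mul_apply]
    linear_combination (-(y * Ofun μ c20 y)) * k1 + (-(y * Ofun (-μ) c10 y)) * k2
  have hdiff : Differentiable ℂ
      (fun z : ℂ => z ^ 2 * (Ofun (-μ) c10 z * Ofun μ c20 z) + Efun (-μ) c10 z * Efun μ c20 z) :=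
    fun y => (hder y).differentiableAt
  have hfz : ∀ y : ℂ, fderiv ℂ
      (fun z : ℂ => z ^ 2 * (Ofun (-μ) c10 z * Ofun μ c20 z) + Efun (-μ) c10 z * Efun μ c20 z) y
      = 0 := by
    intro y
    rw [(hder y).hasFDerivAt.fderiv]
    ext
    simp
  have h10 : x ^ 2 * (Ofun (-μ) c10 x * Ofun μ c20 x) + Efun (-μ) c10 x * Efun μ c20 x
      = (0 : ℂ) ^ 2 * (Ofun (-μ) c10 0 * Ofun μ c20 0) + Efun (-μ) c10 0 * Efun μ c20 0 :=
    is_const_of_fderiv_eq_zero hdiff hfz x 0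
  rw [h10, Efun_zero, Efun_zero, hc]
  ring

end wronskian
theorem stmt0 (μ c10 c20 : ℂ) (hμ : 0 < μ.re) (hc : c10 * c20 = 1)
    (hden : ∀ j : Fin 2, ∀ s : ℕ, 2 * muIdx μ j + 1 + 2 * (s : ℂ) ≠ 0) :
    -- (i) absolute convergence of each entry of the series, and the entries
    -- of Ĉ are entire functions of x
    (∀ x : ℂ, ∀ i j : Fin 2,
      Summable fun k : ℕ => ‖ChatTerm μ c10 c20 x k i j‖) ∧
    (∀ i j : Fin 2, AnalyticOnNhd ℂ (fun x : ℂ => Chat μ c10 c20 x i j) Set.univ) ∧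
    -- (ii) each column C_j solves the singular Dirac system on Π₋
    (∀ x ∈ PiMinus, ∀ j : Fin 2,
      DifferentiableAt ℂ (fun y => Ccol μ c10 c20 y j) x ∧
      (!![0, 1; -1, 0] : Matrix (Fin 2) (Fin 2) ℂ).mulVec
          (deriv (fun y => Ccol μ c10 c20 y j) x) +
        (μ / x) • (!![0, 1; 1, 0] : Matrix (Fin 2) (Fin 2) ℂ).mulVec
          (Ccol μ c10 c20 x j) =
        Ccol μ c10 c20 x j) ∧
    -- (iii) det C(x) = 1 on Π₋
    (∀ x ∈ PiMinus, (Cmat μ c10 c20 x).det = 1) := by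
  have h1 : ∀ s : ℕ, 2 * (-μ) + 1 + 2 * (s : ℂ) ≠ 0 := by
    intro s; have := hden 0 s; simpa [muIdx] using this
  have h2 : ∀ s : ℕ, 2 * μ + 1 + 2 * (s : ℂ) ≠ 0 := by
    intro s; have := hden 1 s; simpa [muIdx] using this
  refine ⟨?_, ?_, ?_, ?_⟩
  · intro x i j
    exact chatTerm_summable_norm μ c10 c20 h1 h2 x i j
  · -- (i) analyticity
    intro i j
    apply DifferentiableOn.analyticOnNhd _ isOpen_univ
    apply Differentiable.differentiableOn
    fin_cases i <;> fin_cases j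
    · show Differentiable ℂ (fun x => Chat μ c10 c20 x 0 0)
      have he : (fun x => Chat μ c10 c20 x 0 0) = fun x => x * Ofun (-μ) c10 x :=
        funext fun x => chat00 μ c10 c20 h1 h2 x
      rw [he]
      exact fun x => ((hasDerivAt_id x).mul (hasDerivAt_Ofun (-μ) c10 h1 x)).differentiableAt
    · show Differentiable ℂ (fun x => Chat μ c10 c20 x 0 1)
      have he : (fun x => Chat μ c10 c20 x 0 1) = fun x => Efun μ c20 x :=
        funext fun x => chat01 μ c10 c20 h1 h2 x
      rw [he]
      exact fun x => (hasDerivAt_Efun μ c20 h2 x).differentiableAt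
    · show Differentiable ℂ (fun x => Chat μ c10 c20 x 1 0)
      have he : (fun x => Chat μ c10 c20 x 1 0) = fun x => -Efun (-μ) c10 x :=
        funext fun x => chat10 μ c10 c20 h1 h2 x
      rw [he]
      exact fun x => ((hasDerivAt_Efun (-μ) c10 h1 x).neg).differentiableAt
    · show Differentiable ℂ (fun x => Chat μ c10 c20 x 1 1)
      have he : (fun x => Chat μ c10 c20 x 1 1) = fun x => x * Ofun μ c20 x :=
        funext fun x => chat11 μ c10 c20 h1 h2 x
      rw [he]
      exact fun x => ((hasDerivAt_id x).mul (hasDerivAt_Ofun μ c20 h2 x)).differentiableAt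
  · -- (ii) the Dirac system
    intro x hx j
    have hxs : x ∈ Complex.slitPlane := by
      rcases hx with h | h
      · exact Or.inr h
      · exact Or.inl h
    have hx0 : x ≠ 0 := Complex.slitPlane_ne_zero hxs
    have hinv : x * x⁻¹ = 1 := mul_inv_cancel₀ hx0
    fin_cases j
    · -- column 0, exponent -μ
      show DifferentiableAt ℂ (fun y => Ccol μ c10 c20 y 0) x ∧
        (!![0, 1; -1, 0] : Matrix (Fin 2) (Fin 2) ℂ).mulVec
            (deriv (fun y => Ccol μ c10 c20 y 0) x) +
          (μ / x) • (!![0, 1; 1, 0] : Matrix (Fin 2) (Fin 2) ℂ).mulVec (Ccol μ c10 c20 x 0) =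
          Ccol μ c10 c20 x 0
      have hcpow : HasDerivAt (fun z : ℂ => z ^ (-μ)) (-μ * x ^ (-μ - 1)) x :=
        (Complex.hasStrictDerivAt_cpow_const hxs).hasDerivAt
      have hfun : (fun y => Ccol μ c10 c20 y 0)
          = fun y => ![y ^ (-μ) * (y * Ofun (-μ) c10 y), y ^ (-μ) * (-Efun (-μ) c10 y)] := by
        funext y i
        fin_cases i
        · show y ^ (muIdx μ 0) * Chat μ c10 c20 y 0 0 = _
          rw [chat00 μ c10 c20 h1 h2 y]
          simp [muIdx]
        · show y ^ (muIdx μ 0) * Chat μ c10 c20 y 1 0 = _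
          rw [chat10 μ c10 c20 h1 h2 y]
          simp [muIdx]
      have hc0 : HasDerivAt (fun y : ℂ => y ^ (-μ) * (y * Ofun (-μ) c10 y))
          (-μ * x ^ (-μ - 1) * (x * Ofun (-μ) c10 x)
            + x ^ (-μ) * (1 * Ofun (-μ) c10 x + x * DOfun (-μ) c10 x)) x :=
        hcpow.mul ((hasDerivAt_id x).mul (hasDerivAt_Ofun (-μ) c10 h1 x))
      have hc1 : HasDerivAt (fun y : ℂ => y ^ (-μ) * (-Efun (-μ) c10 y))
          (-μ * x ^ (-μ - 1) * (-Efun (-μ) c10 x)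
            + x ^ (-μ) * (-(-(x * Ofun (-μ) c10 x)))) x :=
        hcpow.mul (hasDerivAt_Efun (-μ) c10 h1 x).neg
      have hD : HasDerivAt (fun y => Ccol μ c10 c20 y 0)
          (![(-μ * x ^ (-μ - 1) * (x * Ofun (-μ) c10 x)
              + x ^ (-μ) * (1 * Ofun (-μ) c10 x + x * DOfun (-μ) c10 x)),
             (-μ * x ^ (-μ - 1) * (-Efun (-μ) c10 x)
              + x ^ (-μ) * (-(-(x * Ofun (-μ) c10 x))))]) x := by
        rw [hfun]
        apply hasDerivAt_pi.2
        intro i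
        fin_cases i
        · simpa using hc0
        · simpa using hc1
      refine ⟨hD.differentiableAt, ?_⟩
      rw [hD.deriv]
      have hfx : Ccol μ c10 c20 x 0
          = ![x ^ (-μ) * (x * Ofun (-μ) c10 x), x ^ (-μ) * (-Efun (-μ) c10 x)] :=
        congrFun hfun x
      rw [hfx]
      have hxm : x ^ (-μ - 1) = x ^ (-μ) / x := by
        rw [Complex.cpow_sub _ _ hx0, Complex.cpow_one]
      have hk := x_mul_DOfun (-μ) c10 h1 x
      funext i
      fin_cases i <;>
        simp [Matrix.mulVec, dotProduct, Fin.sum_univ_two] <;> rw [hxm]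
      · ring
      · linear_combination (-(x ^ (-μ))) * hk
          + (2 * μ * x ^ (-μ) * Ofun (-μ) c10 x) * hinv
    · -- column 1, exponent μ
      show DifferentiableAt ℂ (fun y => Ccol μ c10 c20 y 1) x ∧
        (!![0, 1; -1, 0] : Matrix (Fin 2) (Fin 2) ℂ).mulVec
            (deriv (fun y => Ccol μ c10 c20 y 1) x) +
          (μ / x) • (!![0, 1; 1, 0] : Matrix (Fin 2) (Fin 2) ℂ).mulVec (Ccol μ c10 c20 x 1) =
          Ccol μ c10 c20 x 1
      have hcpow : HasDerivAt (fun z : ℂ => z ^ μ) (μ * x ^ (μ - 1)) x :=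
        (Complex.hasStrictDerivAt_cpow_const hxs).hasDerivAt
      have hfun : (fun y => Ccol μ c10 c20 y 1)
          = fun y => ![y ^ μ * Efun μ c20 y, y ^ μ * (y * Ofun μ c20 y)] := by
        funext y i
        fin_cases i
        · show y ^ (muIdx μ 1) * Chat μ c10 c20 y 0 1 = _
          rw [chat01 μ c10 c20 h1 h2 y]
          simp [muIdx]
        · show y ^ (muIdx μ 1) * Chat μ c10 c20 y 1 1 = _
          rw [chat11 μ c10 c20 h1 h2 y]
          simp [muIdx]
      have hc0 : HasDerivAt (fun y : ℂ => y ^ μ * Efun μ c20 y)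
          (μ * x ^ (μ - 1) * Efun μ c20 x + x ^ μ * (-(x * Ofun μ c20 x))) x :=
        hcpow.mul (hasDerivAt_Efun μ c20 h2 x)
      have hc1 : HasDerivAt (fun y : ℂ => y ^ μ * (y * Ofun μ c20 y))
          (μ * x ^ (μ - 1) * (x * Ofun μ c20 x)
            + x ^ μ * (1 * Ofun μ c20 x + x * DOfun μ c20 x)) x :=
        hcpow.mul ((hasDerivAt_id x).mul (hasDerivAt_Ofun μ c20 h2 x))
      have hD : HasDerivAt (fun y => Ccol μ c10 c20 y 1)
          (![(μ * x ^ (μ - 1) * Efun μ c20 x + x ^ μ * (-(x * Ofun μ c20 x))),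
             (μ * x ^ (μ - 1) * (x * Ofun μ c20 x)
              + x ^ μ * (1 * Ofun μ c20 x + x * DOfun μ c20 x))]) x := by
        rw [hfun]
        apply hasDerivAt_pi.2
        intro i
        fin_cases i
        · simpa using hc0
        · simpa using hc1
      refine ⟨hD.differentiableAt, ?_⟩
      rw [hD.deriv]
      have hfx : Ccol μ c10 c20 x 1
          = ![x ^ μ * Efun μ c20 x, x ^ μ * (x * Ofun μ c20 x)] :=
        congrFun hfun x
      rw [hfx]
      have hxm : x ^ (μ - 1) = x ^ μ / x := by
        rw [Complex.cpow_sub _ _ hx0, Complex.cpow_one]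
      have hk := x_mul_DOfun μ c20 h2 x
      funext i
      fin_cases i <;>
        simp [Matrix.mulVec, dotProduct, Fin.sum_univ_two] <;> rw [hxm]
      · linear_combination (x ^ μ) * hk + (2 * μ * x ^ μ * Ofun μ c20 x) * hinv
      · ring
  · -- (iii) the determinant
    intro x hx
    have hxs : x ∈ Complex.slitPlane := by
      rcases hx with h | h
      · exact Or.inr h
      · exact Or.inl h
    have hx0 : x ≠ 0 := Complex.slitPlane_ne_zero hxs
    rw [Matrix.det_fin_two]
    simp only [Cmat, Matrix.of_apply, Ccol]
    rw [chat00 μ c10 c20 h1 h2 x, chat01 μ c10 c20 h1 h2 x, chat10 μ c10 c20 h1 h2 x,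
      chat11 μ c10 c20 h1 h2 x]
    simp only [muIdx, Matrix.cons_val_zero, Matrix.cons_val_one, Matrix.head_cons]
    have hμμ : x ^ (-μ) * x ^ μ = 1 := by
      rw [← Complex.cpow_add _ _ hx0]
      simp
    have hw := wronskian μ c10 c20 hc h1 h2 x
    linear_combination (x ^ 2 * (Ofun (-μ) c10 x * Ofun μ c20 x)
      + Efun (-μ) c10 x * Efun μ c20 x) * hμμ + hw
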